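/- Stein's unbiased risk estimate for piecewise differentiable estimators: if μ ∼ ϑ, X|μ ∼ N(μ,1), f = ϑ ∗ φ is the marginal density of X, and m : ℝ → ℝ is differentiable on ℝ \ {x_1,…,x_J} with jumps Δm_j = lim_{x↓x_j} m(x) − lim_{x↑x_j} m(x), then E[(m(X)−μ)²] = E[(m(X)−X)²] + 2(E[∇m(X)] + Σ_{j=1}^J Δm_j f(x_j)) − 1, assuming E[(m(X)−X)²] < ∞, E[∇m(X)] < ∞, and (m(x)−x)φ(x−μ) → 0 as |x| → ∞, ϑ-a.s. -/

import Mathlib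

open MeasureTheory ProbabilityTheory Filter

/-- Standard normal density. -/
noncomputable def stdGaussPDF (v : ℝ) : ℝ := (Real.sqrt (2 * Real.pi))⁻¹ * Real.exp (-v^2 / 2)

namespace SteinAux

open Set Real

lemma ftc_Ioi_nojump {F F' : ℝ → ℝ} {a Fa : ℝ}
    (h1 : ∀ x ∈ Set.Ioi a, HasDerivAt F (F' x) x)
    (h2 : IntegrableOn F' (Set.Ioi a))
    (h3 : Tendsto F atTop (nhds 0))
    (h4 : Tendsto F (nhdsWithin a (Set.Ioi a)) (nhds Fa)) :
    ∫ x in Set.Ioi a, F' x = -Fa := by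
  set G : ℝ → ℝ := fun x => if a < x then F x else Fa with hG
  have hGa : G a = Fa := by simp [hG]
  have hGF : ∀ x ∈ Set.Ioi a, G x = F x := fun x hx => if_pos hx
  have hGt : Tendsto G (nhdsWithin a (Set.Ioi a)) (nhds Fa) :=
    h4.congr' (Filter.eventually_of_mem self_mem_nhdsWithin fun x hx => (hGF x hx).symm)
  have hcont : ContinuousWithinAt G (Set.Ici a) a := by
    have : ContinuousWithinAt G (insert a (Set.Ioi a)) a := by
      rw [ContinuousWithinAt, nhdsWithin_insert, hGa]
      exact tendsto_sup.2 ⟨by simpa [hGa] using tendsto_pure_nhds G a, hGt⟩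
    simpa [Set.Ioi_insert] using this
  have hder : ∀ x ∈ Set.Ioi a, HasDerivAt G (F' x) x := fun x hx =>
    (h1 x hx).congr_of_eventuallyEq (Filter.eventuallyEq_of_mem (isOpen_Ioi.mem_nhds hx) hGF)
  have htopG : Tendsto G atTop (nhds 0) :=
    h3.congr' (Filter.eventually_of_mem (Ioi_mem_atTop a) fun x hx => (hGF x hx).symm)
  rw [integral_Ioi_of_hasDerivAt_of_tendsto hcont hder h2 htopG, hGa, zero_sub]

lemma ftc_Iic_nojump {F F' : ℝ → ℝ} {a Fa : ℝ}
    (h1 : ∀ x ∈ Set.Iio a, HasDerivAt F (F' x) x)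
    (h2 : IntegrableOn F' (Set.Iic a))
    (h3 : Tendsto F atBot (nhds 0))
    (h4 : Tendsto F (nhdsWithin a (Set.Iio a)) (nhds Fa)) :
    ∫ x in Set.Iic a, F' x = Fa := by
  set G : ℝ → ℝ := fun x => if x < a then F x else Fa with hG
  have hGa : G a = Fa := by simp [hG]
  have hGF : ∀ x ∈ Set.Iio a, G x = F x := fun x hx => if_pos hx
  have hGt : Tendsto G (nhdsWithin a (Set.Iio a)) (nhds Fa) :=
    h4.congr' (Filter.eventually_of_mem self_mem_nhdsWithin fun x hx => (hGF x hx).symm)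
  have hcont : ContinuousWithinAt G (Set.Iic a) a := by
    have : ContinuousWithinAt G (insert a (Set.Iio a)) a := by
      rw [ContinuousWithinAt, nhdsWithin_insert, hGa]
      exact tendsto_sup.2 ⟨by simpa [hGa] using tendsto_pure_nhds G a, hGt⟩
    simpa [Set.Iio_insert] using this
  have hder : ∀ x ∈ Set.Iio a, HasDerivAt G (F' x) x := fun x hx =>
    (h1 x hx).congr_of_eventuallyEq (Filter.eventuallyEq_of_mem (isOpen_Iio.mem_nhds hx) hGF)
  have hbotG : Tendsto G atBot (nhds 0) :=
    h3.congr' (Filter.eventually_of_mem (Iio_mem_atBot a) fun x hx => (hGF x hx).symm)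
  rw [integral_Iic_of_hasDerivAt_of_tendsto hcont hder h2 hbotG, hGa, sub_zero]

lemma ftc_Ioc {F F' : ℝ → ℝ} {a b Fa Fb : ℝ} (hab : a < b)
    (h1 : ∀ x ∈ Set.Ioo a b, HasDerivAt F (F' x) x)
    (h2 : IntegrableOn F' (Set.Ioc a b))
    (ha : Tendsto F (nhdsWithin a (Set.Ioi a)) (nhds Fa))
    (hb : Tendsto F (nhdsWithin b (Set.Iio b)) (nhds Fb)) :
    ∫ x in Set.Ioc a b, F' x = Fb - Fa := by
  set G : ℝ → ℝ := fun x => if x ≤ a then Fa else if x < b then F x else Fb with hG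
  have hGF : ∀ x ∈ Set.Ioo a b, G x = F x := fun x hx => by
    simp only [hG, if_neg (not_le.2 hx.1), if_pos hx.2]
  have hGa : G a = Fa := if_pos le_rfl
  have hGb : G b = Fb := by simp only [hG, if_neg (not_le.2 hab), if_neg (lt_irrefl b)]
  have hevab : ∀ᶠ y in nhdsWithin a (Set.Ioi a), G y = F y := by
    filter_upwards [self_mem_nhdsWithin, nhdsWithin_le_nhds (Iio_mem_nhds hab)] with y hy hy'
    exact hGF y ⟨hy, hy'⟩
  have hevba : ∀ᶠ y in nhdsWithin b (Set.Iio b), G y = F y := by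
    filter_upwards [self_mem_nhdsWithin, nhdsWithin_le_nhds (Ioi_mem_nhds hab)] with y hy hy'
    exact hGF y ⟨hy', hy⟩
  have hcont : ContinuousOn G (Set.Icc a b) := by
    intro x hx
    rcases eq_or_lt_of_le hx.1 with heq | hax
    · subst heq
      refine ContinuousWithinAt.mono ?_ (fun y hy => (hy.1 : a ≤ y))
      show ContinuousWithinAt G (Set.Ici a) a
      have : ContinuousWithinAt G (insert a (Set.Ioi a)) a := by
        rw [ContinuousWithinAt, nhdsWithin_insert, hGa]
        exact tendsto_sup.2 ⟨by simpa [hGa] using tendsto_pure_nhds G a, ha.congr' (hevab.mono fun y h => h.symm)⟩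
      simpa [Set.Ioi_insert] using this
    · rcases eq_or_lt_of_le hx.2 with heq | hxb
      · subst heq
        refine ContinuousWithinAt.mono ?_ (fun y hy => (hy.2 : y ≤ x))
        show ContinuousWithinAt G (Set.Iic x) x
        have : ContinuousWithinAt G (insert x (Set.Iio x)) x := by
          rw [ContinuousWithinAt, nhdsWithin_insert, hGb]
          exact tendsto_sup.2 ⟨by simpa [hGb] using tendsto_pure_nhds G x, hb.congr' (hevba.mono fun y h => h.symm)⟩
        simpa [Set.Iio_insert] using this
      · have hopen : Set.Ioo a b ∈ nhds x := isOpen_Ioo.mem_nhds ⟨hax, hxb⟩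
        exact (((h1 x ⟨hax, hxb⟩).continuousAt).congr
          (Filter.eventuallyEq_of_mem hopen hGF).symm).continuousWithinAt
  have hder : ∀ x ∈ Set.Ioo a b, HasDerivWithinAt G (F' x) (Set.Ioi x) x := fun x hx =>
    ((h1 x hx).congr_of_eventuallyEq
      (Filter.eventuallyEq_of_mem (isOpen_Ioo.mem_nhds hx) hGF)).hasDerivWithinAt
  have hint : IntervalIntegrable F' volume a b :=
    (intervalIntegrable_iff_integrableOn_Ioc_of_le hab.le).2 h2
  have := intervalIntegral.integral_eq_sub_of_hasDeriv_right_of_le hab.le hcont hder hint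
  rw [intervalIntegral.integral_of_le hab.le] at this
  rw [this, hGa, hGb]


lemma ftc_Ioi : ∀ (J : ℕ) (xs : Fin J → ℝ), StrictMono xs →
    ∀ (F F' : ℝ → ℝ) (Fp Fm : Fin J → ℝ) (a Fa : ℝ),
    (∀ j, a < xs j) →
    (∀ x ∈ Set.Ioi a, x ∉ Set.range xs → HasDerivAt F (F' x) x) →
    IntegrableOn F' (Set.Ioi a) →
    Tendsto F atTop (nhds 0) →
    Tendsto F (nhdsWithin a (Set.Ioi a)) (nhds Fa) →
    (∀ j, Tendsto F (nhdsWithin (xs j) (Set.Ioi (xs j))) (nhds (Fp j))) →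
    (∀ j, Tendsto F (nhdsWithin (xs j) (Set.Iio (xs j))) (nhds (Fm j))) →
    ∫ x in Set.Ioi a, F' x = (∑ j, (Fm j - Fp j)) - Fa := by
  intro J
  induction J with
  | zero =>
    intro xs _ F F' Fp Fm a Fa _ hd hi ht ha _ _
    have hder : ∀ x ∈ Set.Ioi a, HasDerivAt F (F' x) x := fun x hx =>
      hd x hx (by simp)
    rw [ftc_Ioi_nojump hder hi ht ha]
    simp
  | succ n ih =>
    intro xs hxs F F' Fp Fm a Fa hlt hd hi ht ha hFp hFm
    set b := xs 0 with hb
    have hab : a < b := hlt 0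
    have hsplit : Set.Ioi a = Set.Ioc a b ∪ Set.Ioi b := (Set.Ioc_union_Ioi_eq_Ioi hab.le).symm
    have hdisj : Disjoint (Set.Ioc a b) (Set.Ioi b) := by
      rw [Set.disjoint_left]
      rintro x ⟨_, hxb⟩ hxb'
      exact absurd (hxb' : b < x) (not_lt.2 hxb)
    have hi1 : IntegrableOn F' (Set.Ioc a b) := hi.mono_set (by rw [hsplit]; exact Set.subset_union_left)
    have hi2 : IntegrableOn F' (Set.Ioi b) := hi.mono_set (by rw [hsplit]; exact Set.subset_union_right)
    rw [hsplit, setIntegral_union hdisj measurableSet_Ioi hi1 hi2]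
    have e1 : ∫ x in Set.Ioc a b, F' x = Fm 0 - Fa := by
      refine ftc_Ioc hab (fun x hx => hd x hx.1 ?_) hi1 ha (hFm 0)
      rintro ⟨i, rfl⟩
      rcases eq_or_ne i 0 with rfl | hi0
      · exact lt_irrefl _ hx.2
      · exact absurd (hxs (Fin.pos_of_ne_zero hi0)) (not_lt.2 hx.2.le)
    have e2 : ∫ x in Set.Ioi b, F' x = (∑ j : Fin n, (Fm j.succ - Fp j.succ)) - Fp 0 := by
      refine ih (fun j => xs j.succ) (hxs.comp (Fin.strictMono_succ)) F F'
        (fun j => Fp j.succ) (fun j => Fm j.succ) b (Fp 0)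
        (fun j => hxs (Fin.succ_pos j)) ?_ hi2 ht (hFp 0)
        (fun j => hFp j.succ) (fun j => hFm j.succ)
      intro x hx hxr
      refine hd x (lt_trans hab hx) ?_
      rintro ⟨i, rfl⟩
      rcases eq_or_ne i 0 with rfl | hi0
      · exact lt_irrefl _ (Set.mem_Ioi.1 (hb ▸ hx))
      · obtain ⟨j, rfl⟩ := Fin.eq_succ_of_ne_zero hi0
        exact hxr ⟨j, rfl⟩
    rw [e1, e2, Fin.sum_univ_succ]
    ring


lemma ftc_line {J : ℕ} {xs : Fin J → ℝ} (hxs : StrictMono xs) {F F' : ℝ → ℝ}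
    {Fp Fm : Fin J → ℝ}
    (hderiv : ∀ x, x ∉ Set.range xs → HasDerivAt F (F' x) x)
    (hint : Integrable F')
    (htop : Tendsto F atTop (nhds 0)) (hbot : Tendsto F atBot (nhds 0))
    (hFp : ∀ j, Tendsto F (nhdsWithin (xs j) (Set.Ioi (xs j))) (nhds (Fp j)))
    (hFm : ∀ j, Tendsto F (nhdsWithin (xs j) (Set.Iio (xs j))) (nhds (Fm j))) :
    ∫ x, F' x = ∑ j, (Fm j - Fp j) := by
  obtain ⟨a, hlt⟩ : ∃ a : ℝ, ∀ j, a < xs j := by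
    rcases isEmpty_or_nonempty (Fin J) with h | h
    · exact ⟨0, fun j => h.elim j⟩
    · refine ⟨(Finset.univ.inf' Finset.univ_nonempty xs) - 1, fun j => ?_⟩
      have := Finset.inf'_le xs (Finset.mem_univ j)
      linarith
  have hna : a ∉ Set.range xs := by rintro ⟨j, rfl⟩; exact lt_irrefl _ (hlt j)
  have hca : ContinuousAt F a := (hderiv a hna).continuousAt
  have h1 : ∫ x in Set.Iic a, F' x = F a := by
    refine ftc_Iic_nojump (fun x hx => hderiv x ?_) hint.integrableOn hbot
      hca.continuousWithinAt
    rintro ⟨j, rfl⟩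
    exact absurd (lt_trans hx (hlt j)) (lt_irrefl _)
  have h2 : ∫ x in Set.Ioi a, F' x = (∑ j, (Fm j - Fp j)) - F a :=
    ftc_Ioi J xs hxs F F' Fp Fm a (F a) hlt (fun x _ hx => hderiv x hx)
      hint.integrableOn htop hca.continuousWithinAt hFp hFm
  have h3 : ∫ x, F' x = (∫ x in Set.Iic a, F' x) + ∫ x in Set.Ioi a, F' x := by
    rw [← Set.compl_Iic]
    exact (integral_add_compl measurableSet_Iic hint).symm
  rw [h3, h1, h2]
  ring


lemma stdGaussPDF_pos (v : ℝ) : 0 < stdGaussPDF v := by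
  unfold stdGaussPDF
  positivity

lemma stdGaussPDF_nonneg (v : ℝ) : 0 ≤ stdGaussPDF v := (stdGaussPDF_pos v).le

lemma stdGaussPDF_le (v : ℝ) : stdGaussPDF v ≤ (Real.sqrt (2 * Real.pi))⁻¹ := by
  unfold stdGaussPDF
  have h1 : Real.exp (-v^2 / 2) ≤ 1 := by
    rw [Real.exp_le_one_iff]
    nlinarith [sq_nonneg v]
  have h2 : (0:ℝ) ≤ (Real.sqrt (2 * Real.pi))⁻¹ := by positivity
  nlinarith

lemma continuous_stdGaussPDF : Continuous stdGaussPDF := by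
  unfold stdGaussPDF
  fun_prop

lemma hasDerivAt_stdGaussPDF (t x : ℝ) :
    HasDerivAt (fun x => stdGaussPDF (x - t)) (-(x - t) * stdGaussPDF (x - t)) x := by
  have h0 : HasDerivAt (fun x : ℝ => x - t) 1 x := (hasDerivAt_id x).sub_const t
  have h1 : HasDerivAt (fun x : ℝ => (x - t)^2) (2*(x-t)) x := by
    simpa using h0.fun_pow 2
  have h2 : HasDerivAt (fun x : ℝ => -(x - t)^2 / 2) (-(x-t)) x := by
    have heq : (fun x : ℝ => -(x - t)^2 / 2) = fun x : ℝ => (-(1/2) : ℝ) * (x - t)^2 := by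
      funext y; ring
    rw [heq]
    exact (h1.const_mul (-(1/2) : ℝ)).congr_deriv (by ring)
  have h3 := (h2.exp).const_mul ((Real.sqrt (2 * Real.pi))⁻¹)
  have heq2 : (fun x : ℝ => (Real.sqrt (2 * Real.pi))⁻¹ * Real.exp (-(x - t)^2 / 2))
      = fun x : ℝ => stdGaussPDF (x - t) := by
    funext y; rfl
  rw [heq2] at h3
  exact h3.congr_deriv (by unfold stdGaussPDF; ring)

lemma stdGauss_eq_pdf (t x : ℝ) : gaussianPDFReal t 1 x = stdGaussPDF (x - t) := by
  simp [gaussianPDFReal, stdGaussPDF]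

lemma gaussianReal_one_eq (t : ℝ) :
    gaussianReal t 1 = volume.withDensity fun x => ((stdGaussPDF (x - t)).toNNReal : ENNReal) := by
  rw [gaussianReal_of_var_ne_zero t one_ne_zero]
  congr 1
  funext x
  rw [gaussianPDF, stdGauss_eq_pdf]
  rfl

lemma meas_toNN (t : ℝ) : Measurable fun x => (stdGaussPDF (x - t)).toNNReal :=
  (continuous_stdGaussPDF.comp (continuous_id.sub continuous_const)).measurable.real_toNNReal

lemma integral_gaussianReal' (t : ℝ) (g : ℝ → ℝ) :
    ∫ x, g x ∂(gaussianReal t 1) = ∫ x, g x * stdGaussPDF (x - t) := by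
  rw [gaussianReal_one_eq, integral_withDensity_eq_integral_smul (meas_toNN t) g]
  congr 1
  funext x
  rw [NNReal.smul_def, Real.coe_toNNReal _ (stdGaussPDF_nonneg _), smul_eq_mul]
  ring

lemma integrable_gaussianReal_iff (t : ℝ) (g : ℝ → ℝ) :
    Integrable g (gaussianReal t 1) ↔ Integrable (fun x => g x * stdGaussPDF (x - t)) volume := by
  rw [gaussianReal_one_eq, integrable_withDensity_iff_integrable_smul (meas_toNN t)]
  have : (fun x => (stdGaussPDF (x - t)).toNNReal • g x) = fun x => g x * stdGaussPDF (x - t) := by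
    funext x
    rw [NNReal.smul_def, Real.coe_toNNReal _ (stdGaussPDF_nonneg _), smul_eq_mul]
    ring
  rw [this]

lemma integrable_stdGauss (t : ℝ) : Integrable (fun x => stdGaussPDF (x - t)) volume := by
  have := integrable_gaussianPDFReal t 1
  refine this.congr (Filter.Eventually.of_forall fun x => ?_)
  exact stdGauss_eq_pdf t x

lemma integral_stdGauss (t : ℝ) : ∫ x, stdGaussPDF (x - t) = 1 := by
  rw [show (fun x => stdGaussPDF (x - t)) = gaussianPDFReal t 1 from
    funext fun x => (stdGauss_eq_pdf t x).symm]
  exact integral_gaussianPDFReal_eq_one t one_ne_zero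


lemma tendsto_mul_gauss_atTop : Tendsto (fun y : ℝ => y * stdGaussPDF y) atTop (nhds 0) := by
  have h := rpow_mul_exp_neg_mul_sq_isLittleO_exp_neg (by norm_num : (0:ℝ) < 1/2) 1
  have hexp : Tendsto (fun x : ℝ => Real.exp (-(1/2) * x)) atTop (nhds 0) := by
    apply Real.tendsto_exp_atBot.comp
    exact (tendsto_const_mul_atBot_of_neg (by norm_num : -(1/2:ℝ) < 0)).2 tendsto_id
  have h2 : Tendsto (fun y : ℝ => y ^ (1:ℝ) * Real.exp (-(1/2) * y^2)) atTop (nhds 0) :=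
    h.isBigO.trans_tendsto hexp
  have h3 : Tendsto (fun y : ℝ => y * Real.exp (-y^2/2)) atTop (nhds 0) :=
    h2.congr fun y => by rw [Real.rpow_one]; ring_nf
  have h4 := h3.const_mul ((Real.sqrt (2*Real.pi))⁻¹)
  rw [mul_zero] at h4
  exact h4.congr fun y => by unfold stdGaussPDF; ring

lemma stdGaussPDF_neg (y : ℝ) : stdGaussPDF (-y) = stdGaussPDF y := by
  unfold stdGaussPDF; ring_nf

lemma tendsto_mul_gauss_atBot : Tendsto (fun y : ℝ => y * stdGaussPDF y) atBot (nhds 0) := by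
  have h := (tendsto_mul_gauss_atTop.comp tendsto_neg_atBot_atTop).neg
  rw [neg_zero] at h
  refine h.congr fun y => ?_
  show -((-y) * stdGaussPDF (-y)) = y * stdGaussPDF y
  rw [stdGaussPDF_neg]; ring

lemma sq_gauss_bound (y : ℝ) :
    y^2 * stdGaussPDF y ≤ (Real.sqrt (2*Real.pi))⁻¹ * (4 * Real.exp (-(1/4) * y^2)) := by
  have hc : (0:ℝ) ≤ (Real.sqrt (2*Real.pi))⁻¹ := by positivity
  have hgt : (0:ℝ) < Real.exp (-(1/4)*y^2) := Real.exp_pos _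
  have hprod : Real.exp ((1/4)*y^2) * Real.exp (-(1/4)*y^2) = 1 := by
    rw [← Real.exp_add]; ring_nf; exact Real.exp_zero
  have hs : (1/4)*y^2 ≤ Real.exp ((1/4)*y^2) := by
    nlinarith [Real.add_one_le_exp ((1/4)*y^2)]
  have key : y^2 * Real.exp (-(1/4)*y^2) ≤ 4 := by nlinarith
  have hsplit : stdGaussPDF y
      = (Real.sqrt (2*Real.pi))⁻¹ * (Real.exp (-(1/4)*y^2) * Real.exp (-(1/4)*y^2)) := by
    unfold stdGaussPDF
    rw [← Real.exp_add]
    ring_nf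
  rw [hsplit]
  nlinarith [mul_le_mul_of_nonneg_right key (mul_nonneg hc hgt.le)]

lemma integrable_sq_stdGauss : Integrable (fun y : ℝ => y^2 * stdGaussPDF y) := by
  have hi : Integrable (fun y : ℝ => (Real.sqrt (2*Real.pi))⁻¹ * (4 * Real.exp (-(1/4) * y^2))) :=
    ((integrable_exp_neg_mul_sq (by norm_num : (0:ℝ) < 1/4)).const_mul 4).const_mul _
  refine hi.mono' (((continuous_pow 2).mul continuous_stdGaussPDF).aestronglyMeasurable)
    (Filter.Eventually.of_forall fun y => ?_)
  rw [Real.norm_of_nonneg (mul_nonneg (sq_nonneg y) (stdGaussPDF_nonneg y))]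
  exact sq_gauss_bound y

lemma integrable_stdGauss0 : Integrable stdGaussPDF := by
  simpa using integrable_stdGauss 0

lemma integral_sq_stdGauss : ∫ y : ℝ, y^2 * stdGaussPDF y = 1 := by
  set F : ℝ → ℝ := fun y => y * stdGaussPDF y with hF
  set F' : ℝ → ℝ := fun y => stdGaussPDF y - y^2 * stdGaussPDF y with hF'
  have hder : ∀ y : ℝ, HasDerivAt F (F' y) y := by
    intro y
    have h1 : HasDerivAt stdGaussPDF (-y * stdGaussPDF y) y := by
      simpa using hasDerivAt_stdGaussPDF 0 y
    have h2 := (hasDerivAt_id y).mul h1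
    exact h2.congr_deriv (by simp only [hF', id_eq]; ring)
  have hint : Integrable F' := integrable_stdGauss0.sub integrable_sq_stdGauss
  have hF0 : F 0 = 0 := by simp [hF]
  have h1 : ∫ y in Set.Iic 0, F' y = F 0 :=
    ftc_Iic_nojump (fun y _ => hder y) hint.integrableOn tendsto_mul_gauss_atBot
      ((hder 0).continuousAt.continuousWithinAt)
  have h2 : ∫ y in Set.Ioi 0, F' y = -(F 0) :=
    ftc_Ioi_nojump (fun y _ => hder y) hint.integrableOn tendsto_mul_gauss_atTop
      ((hder 0).continuousAt.continuousWithinAt)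
  have h3 : ∫ y, F' y = 0 := by
    rw [show (∫ y, F' y) = (∫ y in Set.Iic 0, F' y) + ∫ y in Set.Ioi 0, F' y by
      rw [← Set.compl_Iic]; exact (integral_add_compl measurableSet_Iic hint).symm,
      h1, h2, hF0]
    ring
  have h4 : ∫ y, F' y = (∫ y, stdGaussPDF y) - ∫ y, y^2 * stdGaussPDF y :=
    integral_sub integrable_stdGauss0 integrable_sq_stdGauss
  have h5 : ∫ y, stdGaussPDF y = 1 := by simpa using integral_stdGauss 0
  linarith [h3, h4.symm.trans h3]

lemma integrable_sq_stdGauss' (t : ℝ) :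
    Integrable (fun x : ℝ => (x - t)^2 * stdGaussPDF (x - t)) :=
  integrable_sq_stdGauss.comp_sub_right t

lemma integral_sq_stdGauss' (t : ℝ) : ∫ x : ℝ, (x - t)^2 * stdGaussPDF (x - t) = 1 := by
  rw [integral_sub_right_eq_self (fun y => y^2 * stdGaussPDF y) t]
  exact integral_sq_stdGauss


noncomputable def gaussKer : Kernel ℝ ℝ where
  toFun t := gaussianReal t 1
  measurable' := by
    apply Measure.measurable_of_measurable_coe
    intro s hs
    simp_rw [gaussianReal_one_eq, withDensity_apply _ hs, ← lintegral_indicator hs]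
    have hg : Measurable fun p : ℝ × ℝ =>
        s.indicator (fun _ => (1:ENNReal)) p.2 * ((stdGaussPDF (p.2 - p.1)).toNNReal : ENNReal) :=
      ((measurable_one.indicator hs).comp measurable_snd).mul
        ((continuous_stdGaussPDF.comp
          (continuous_snd.sub continuous_fst)).measurable.real_toNNReal.coe_nnreal_ennreal)
    have heq : (fun t => ∫⁻ x, s.indicator (fun x => ((stdGaussPDF (x - t)).toNNReal : ENNReal)) x)
        = fun t => ∫⁻ x, s.indicator (fun _ => (1:ENNReal)) x
            * ((stdGaussPDF (x - t)).toNNReal : ENNReal) := by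
      funext t
      exact lintegral_congr fun x => by by_cases hx : x ∈ s <;> simp [hx]
    rw [heq]
    exact hg.lintegral_prod_right'

@[simp] lemma gaussKer_apply (t : ℝ) : gaussKer t = gaussianReal t 1 := rfl

instance : IsMarkovKernel gaussKer :=
  ⟨fun t => inferInstanceAs (IsProbabilityMeasure (gaussianReal t 1))⟩

lemma measurable_mapFam :
    Measurable fun t : ℝ => Measure.map (fun x => (x, t)) (gaussianReal t 1) := by
  apply Measure.measurable_of_measurable_coe
  intro s hs
  have heq : (fun t => Measure.map (fun x => (x, t)) (gaussianReal t 1) s)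
      = fun t => gaussKer t (Prod.mk t ⁻¹' (Prod.swap ⁻¹' s)) := by
    funext t
    rw [Measure.map_apply measurable_prodMk_right hs]
    rfl
  rw [heq]
  exact Kernel.measurable_kernel_prodMk_left (measurable_swap hs)

lemma pi_eq (ϑ : Measure ℝ) [IsProbabilityMeasure ϑ] :
    Measure.bind ϑ (fun t => Measure.map (fun x => (x, t)) (gaussianReal t 1))
      = (ϑ ⊗ₘ gaussKer).map Prod.swap := by
  ext s hs
  rw [Measure.bind_apply hs measurable_mapFam.aemeasurable,
    Measure.map_apply measurable_swap hs,
    Measure.compProd_apply (measurable_swap hs)]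
  refine lintegral_congr fun t => ?_
  rw [Measure.map_apply measurable_prodMk_right hs]
  rfl


lemma stein_t {J : ℕ} {xs : Fin J → ℝ} (hxs : StrictMono xs)
    {m m' : ℝ → ℝ} (hmm : Measurable m)
    (hderiv : ∀ y : ℝ, y ∉ Set.range xs → HasDerivAt m (m' y) y)
    {mplus mminus : Fin J → ℝ}
    (hplus : ∀ j, Tendsto m (nhdsWithin (xs j) (Set.Ioi (xs j))) (nhds (mplus j)))
    (hminus : ∀ j, Tendsto m (nhdsWithin (xs j) (Set.Iio (xs j))) (nhds (mminus j)))
    (t : ℝ)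
    (ha : Integrable (fun x => (m x - x)^2) (gaussianReal t 1))
    (hb : Integrable m' (gaussianReal t 1))
    (hctop : Tendsto (fun x => (m x - x) * stdGaussPDF (x - t)) atTop (nhds 0))
    (hcbot : Tendsto (fun x => (m x - x) * stdGaussPDF (x - t)) atBot (nhds 0)) :
    ∫ x, (m x - x) * (x - t) ∂(gaussianReal t 1)
      = (∫ x, m' x ∂(gaussianReal t 1)) - 1
        + ∑ j, (mplus j - mminus j) * stdGaussPDF (xs j - t) := by
  have ha' : Integrable (fun x => (m x - x)^2 * stdGaussPDF (x - t)) volume :=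
    (integrable_gaussianReal_iff t _).1 ha
  have hb' : Integrable (fun x => m' x * stdGaussPDF (x - t)) volume :=
    (integrable_gaussianReal_iff t _).1 hb
  have hsq := integrable_sq_stdGauss' t
  have hφ := integrable_stdGauss t
  have hmc : AEStronglyMeasurable (fun x => ((m x - x) * (x - t)) * stdGaussPDF (x - t)) volume :=
    ((((hmm.sub measurable_id).mul (measurable_id.sub measurable_const)).mul
      ((continuous_stdGaussPDF.comp
        (continuous_id.sub continuous_const)).measurable))).aestronglyMeasurable
  have hcross : Integrable (fun x => ((m x - x) * (x - t)) * stdGaussPDF (x - t)) volume := by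
    refine (ha'.add hsq).mono' hmc (Filter.Eventually.of_forall fun x => ?_)
    have h0 := stdGaussPDF_nonneg (x - t)
    have h1 : ‖((m x - x) * (x - t)) * stdGaussPDF (x - t)‖
        = |m x - x| * |x - t| * stdGaussPDF (x - t) := by
      rw [Real.norm_eq_abs, abs_mul, abs_mul, abs_of_nonneg h0]
    rw [h1]
    have h2 : |m x - x| * |x - t| ≤ (m x - x)^2 + (x - t)^2 := by
      nlinarith [sq_nonneg (|m x - x| - |x - t|), sq_abs (m x - x), sq_abs (x - t),
        abs_nonneg (m x - x), abs_nonneg (x - t)]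
    have h3 := mul_le_mul_of_nonneg_right h2 h0
    refine le_trans h3 (le_of_eq ?_)
    simp only [Pi.add_apply]
    ring
  set F : ℝ → ℝ := fun x => (m x - x) * stdGaussPDF (x - t) with hFdef
  set F' : ℝ → ℝ := fun x => (m' x * stdGaussPDF (x - t) - stdGaussPDF (x - t))
      - ((m x - x) * (x - t)) * stdGaussPDF (x - t) with hF'def
  have hFint : Integrable F' := (hb'.sub hφ).sub hcross
  have hFd : ∀ x, x ∉ Set.range xs → HasDerivAt F (F' x) x := by
    intro x hx
    have h1 : HasDerivAt (fun y => m y - y) (m' x - 1) x := (hderiv x hx).sub (hasDerivAt_id x)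
    have h2 := h1.mul (hasDerivAt_stdGaussPDF t x)
    exact h2.congr_deriv (by simp only [hF'def]; ring)
  have hφt : ∀ (c : ℝ) (l : Filter ℝ), l ≤ nhds c →
      Tendsto (fun x => stdGaussPDF (x - t)) l (nhds (stdGaussPDF (c - t))) := fun c l hl =>
    ((continuous_stdGaussPDF.comp (continuous_id.sub continuous_const)).tendsto c).mono_left hl
  have hFp : ∀ j, Tendsto F (nhdsWithin (xs j) (Set.Ioi (xs j)))
      (nhds ((mplus j - xs j) * stdGaussPDF (xs j - t))) := fun j =>
    ((hplus j).sub (tendsto_id.mono_right nhdsWithin_le_nhds)).mul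
      (hφt (xs j) _ nhdsWithin_le_nhds)
  have hFm : ∀ j, Tendsto F (nhdsWithin (xs j) (Set.Iio (xs j)))
      (nhds ((mminus j - xs j) * stdGaussPDF (xs j - t))) := fun j =>
    ((hminus j).sub (tendsto_id.mono_right nhdsWithin_le_nhds)).mul
      (hφt (xs j) _ nhdsWithin_le_nhds)
  have hkey := ftc_line hxs hFd hFint hctop hcbot hFp hFm
  have i1 : ∫ x, F' x = (∫ x, (m' x * stdGaussPDF (x - t) - stdGaussPDF (x - t)))
      - ∫ x, (m x - x) * (x - t) * stdGaussPDF (x - t) := integral_sub (hb'.sub hφ) hcross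
  have i2 : ∫ x, (m' x * stdGaussPDF (x - t) - stdGaussPDF (x - t))
      = (∫ x, m' x * stdGaussPDF (x - t)) - ∫ x, stdGaussPDF (x - t) := integral_sub hb' hφ
  have e1 : ∫ x, F' x = (∫ x, m' x * stdGaussPDF (x - t)) - 1
      - ∫ x, (m x - x) * (x - t) * stdGaussPDF (x - t) := by
    rw [i1, i2, integral_stdGauss t]
  have e2 : ∑ j, ((mminus j - xs j) * stdGaussPDF (xs j - t)
        - (mplus j - xs j) * stdGaussPDF (xs j - t))
      = -∑ j, (mplus j - mminus j) * stdGaussPDF (xs j - t) := by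
    rw [← Finset.sum_neg_distrib]
    exact Finset.sum_congr rfl fun j _ => by ring
  rw [e2, e1] at hkey
  have c1 : ∫ x, (m x - x) * (x - t) ∂(gaussianReal t 1)
      = ∫ x, (m x - x) * (x - t) * stdGaussPDF (x - t) := by
    rw [integral_gaussianReal' t (fun x => (m x - x) * (x - t))]
  have c2 : ∫ x, m' x ∂(gaussianReal t 1) = ∫ x, m' x * stdGaussPDF (x - t) :=
    integral_gaussianReal' t m'
  rw [c1, c2]
  linarith [hkey]


end SteinAux

open SteinAux

/-- Stein's unbiased risk estimate for piecewise differentiable estimators (Lemma 4):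
if `μ ∼ ϑ`, `X | μ ∼ N(μ, 1)`, `f = ϑ ∗ φ` is the marginal density of `X`, and `m` is
differentiable away from finitely many jump points `x_1 < … < x_J` with jumps `Δm_j`, then
`E[(m(X)−μ)²] = E[(m(X)−X)²] + 2(E[∇m(X)] + Σ_j Δm_j f(x_j)) − 1`. -/
theorem sure_piecewise (ϑ : Measure ℝ) [IsProbabilityMeasure ϑ]
    (J : ℕ) (xs : Fin J → ℝ) (hxs : StrictMono xs)
    (m m' : ℝ → ℝ) (hm'm : Measurable m') (hmm : Measurable m)
    (hderiv : ∀ y : ℝ, y ∉ Set.range xs → HasDerivAt m (m' y) y)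
    -- one-sided limits and jumps at the discontinuity points
    (mplus mminus : Fin J → ℝ)
    (hplus : ∀ j, Filter.Tendsto m (nhdsWithin (xs j) (Set.Ioi (xs j))) (nhds (mplus j)))
    (hminus : ∀ j, Filter.Tendsto m (nhdsWithin (xs j) (Set.Iio (xs j))) (nhds (mminus j)))
    -- marginal density of X
    (f : ℝ → ℝ) (hf : ∀ x, f x = ∫ t, stdGaussPDF (x - t) ∂ϑ)
    -- joint distribution of (X, μ)
    (π : Measure (ℝ × ℝ))
    (hπ : π = Measure.bind ϑ (fun t => Measure.map (fun x => (x, t)) (gaussianReal t 1)))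
    -- integrability and boundary conditions
    (hint1 : Integrable (fun z : ℝ × ℝ => (m z.1 - z.1)^2) π)
    (hint2 : Integrable (fun z : ℝ × ℝ => m' z.1) π)
    (hint3 : Integrable (fun z : ℝ × ℝ => (m z.1 - z.2)^2) π)
    (hbound : ∀ᵐ t ∂ϑ,
      Filter.Tendsto (fun x => (m x - x) * stdGaussPDF (x - t)) Filter.atTop (nhds 0) ∧
      Filter.Tendsto (fun x => (m x - x) * stdGaussPDF (x - t)) Filter.atBot (nhds 0)) :
    ∫ z, (m z.1 - z.2)^2 ∂π =
      (∫ z, (m z.1 - z.1)^2 ∂π) +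
        2 * ((∫ z, m' z.1 ∂π) + ∑ j, (mplus j - mminus j) * f (xs j)) - 1 := by

  classical
  set ρ : Measure (ℝ × ℝ) := ϑ ⊗ₘ gaussKer with hρ
  have hswapEq : π = ρ.map ((MeasurableEquiv.prodComm : ℝ × ℝ ≃ᵐ ℝ × ℝ)) := by
    rw [hπ]; exact pi_eq ϑ
  have hIntIff : ∀ g : ℝ × ℝ → ℝ,
      Integrable g π ↔ Integrable (fun z : ℝ × ℝ => g (z.2, z.1)) ρ := by
    intro g
    rw [hswapEq, integrable_map_equiv]
    exact Iff.rfl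
  have hIntgl : ∀ g : ℝ × ℝ → ℝ, ∫ z, g z ∂π = ∫ z, g (z.2, z.1) ∂ρ := by
    intro g
    rw [hswapEq, integral_map_equiv]
    rfl
  -- a.e. section integrability
  have h1ρ : Integrable (fun z : ℝ × ℝ => (m z.2 - z.2)^2) ρ := (hIntIff _).1 hint1
  have h2ρ : Integrable (fun z : ℝ × ℝ => m' z.2) ρ := (hIntIff _).1 hint2
  have h1ae : ∀ᵐ t ∂ϑ, Integrable (fun x => (m x - x)^2) (gaussianReal t 1) :=
    ((Measure.integrable_compProd_iff h1ρ.aestronglyMeasurable).1 h1ρ).1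
  have h2ae : ∀ᵐ t ∂ϑ, Integrable m' (gaussianReal t 1) :=
    ((Measure.integrable_compProd_iff h2ρ.aestronglyMeasurable).1 h2ρ).1
  have h2norm : Integrable (fun t => ∫ x, ‖m' x‖ ∂(gaussianReal t 1)) ϑ :=
    ((Measure.integrable_compProd_iff h2ρ.aestronglyMeasurable).1 h2ρ).2
  -- integrability of (x - t)^2 under ρ and π
  have hsec : ∀ t : ℝ, Integrable (fun x : ℝ => (x - t)^2) (gaussianReal t 1) := fun t =>
    (integrable_gaussianReal_iff t _).2 (integrable_sq_stdGauss' t)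
  have hsecint : ∀ t : ℝ, ∫ x, (x - t)^2 ∂(gaussianReal t 1) = 1 := fun t => by
    rw [integral_gaussianReal' t (fun x => (x - t)^2)]
    exact integral_sq_stdGauss' t
  have hRmeas : AEStronglyMeasurable (fun z : ℝ × ℝ => (z.2 - z.1)^2) ρ :=
    (((measurable_snd.sub measurable_fst).pow_const 2)).aestronglyMeasurable
  have hRρ : Integrable (fun z : ℝ × ℝ => (z.2 - z.1)^2) ρ := by
    rw [Measure.integrable_compProd_iff hRmeas]
    constructor
    · exact Filter.Eventually.of_forall fun t => hsec t
    · refine (integrable_const (1:ℝ)).congr (Filter.Eventually.of_forall fun t => ?_)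
      show (1:ℝ) = ∫ y, ‖(y - t)^2‖ ∂(gaussianReal t 1)
      simp only [Real.norm_eq_abs, abs_pow, sq_abs]
      exact (hsecint t).symm
  have hR : Integrable (fun z : ℝ × ℝ => (z.1 - z.2)^2) π := (hIntIff _).2 hRρ
  have hRint : ∫ z, (z.1 - z.2)^2 ∂π = 1 := by
    rw [hIntgl (fun z => (z.1 - z.2)^2), Measure.integral_compProd hRρ]
    refine Eq.trans (integral_congr_ae (g := fun _ => (1:ℝ))
      (Filter.Eventually.of_forall fun t => hsecint t)) ?_
    simp
  -- cross term
  have hQ : Integrable (fun z : ℝ × ℝ => (m z.1 - z.1) * (z.1 - z.2)) π := by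
    refine (hint1.add hR).mono' ?_ (Filter.Eventually.of_forall fun z => ?_)
    · exact (((hmm.comp measurable_fst).sub measurable_fst).mul
        (measurable_fst.sub measurable_snd)).aestronglyMeasurable
    · have h2 : |m z.1 - z.1| * |z.1 - z.2| ≤ (m z.1 - z.1)^2 + (z.1 - z.2)^2 := by
        nlinarith [sq_nonneg (|m z.1 - z.1| - |z.1 - z.2|), sq_abs (m z.1 - z.1),
          sq_abs (z.1 - z.2), abs_nonneg (m z.1 - z.1), abs_nonneg (z.1 - z.2)]
      rw [Real.norm_eq_abs, abs_mul]
      exact h2.trans_eq (by simp [Pi.add_apply])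
  have hQρ : Integrable (fun z : ℝ × ℝ => (m z.2 - z.2) * (z.2 - z.1)) ρ := (hIntIff _).1 hQ
  -- key inner identity
  have key : ∀ᵐ t ∂ϑ, ∫ x, (m x - x) * (x - t) ∂(gaussianReal t 1)
      = (∫ x, m' x ∂(gaussianReal t 1)) - 1
        + ∑ j, (mplus j - mminus j) * stdGaussPDF (xs j - t) := by
    filter_upwards [h1ae, h2ae, hbound] with t ht1 ht2 ht3
    exact stein_t hxs hmm hderiv hplus hminus t ht1 ht2 ht3.1 ht3.2
  -- integrability of the pieces in t
  have hBmeas : AEStronglyMeasurable (fun t => ∫ x, m' x ∂(gaussianReal t 1)) ϑ := by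
    have : StronglyMeasurable fun z : ℝ × ℝ => m' z.2 :=
      (hm'm.comp measurable_snd).stronglyMeasurable
    exact (this.integral_kernel_prod_right' (κ := gaussKer)).aestronglyMeasurable
  have hB : Integrable (fun t => ∫ x, m' x ∂(gaussianReal t 1)) ϑ := by
    refine h2norm.mono' hBmeas (Filter.Eventually.of_forall fun t => ?_)
    exact norm_integral_le_integral_norm m'
  have hφj : ∀ j, Integrable (fun t => stdGaussPDF (xs j - t)) ϑ := by
    intro j
    refine (integrable_const ((Real.sqrt (2 * Real.pi))⁻¹)).mono'
      ((continuous_stdGaussPDF.comp (continuous_const.sub continuous_id)).measurable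
        |>.aestronglyMeasurable) (Filter.Eventually.of_forall fun t => ?_)
    rw [Real.norm_of_nonneg (stdGaussPDF_nonneg _)]
    exact stdGaussPDF_le _
  -- compute ∫ Q dπ
  have hQint : ∫ z, (m z.1 - z.1) * (z.1 - z.2) ∂π
      = (∫ z, m' z.1 ∂π) - 1 + ∑ j, (mplus j - mminus j) * f (xs j) := by
    rw [hIntgl (fun z => (m z.1 - z.1) * (z.1 - z.2)), Measure.integral_compProd hQρ]
    have step : ∫ t, (∫ x, (m x - x) * (x - t) ∂(gaussianReal t 1)) ∂ϑ
        = ∫ t, ((∫ x, m' x ∂(gaussianReal t 1)) - 1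
          + ∑ j, (mplus j - mminus j) * stdGaussPDF (xs j - t)) ∂ϑ := integral_congr_ae key
    rw [show (∫ t, (∫ x, (m (t, x).2 - (t, x).2) * ((t, x).2 - (t, x).1) ∂(gaussKer t)) ∂ϑ)
        = ∫ t, (∫ x, (m x - x) * (x - t) ∂(gaussianReal t 1)) ∂ϑ from rfl, step]
    have hsub : Integrable (fun t => (∫ x, m' x ∂(gaussianReal t 1)) - 1) ϑ :=
      hB.sub (integrable_const 1)
    have hsum : Integrable (fun t => ∑ j, (mplus j - mminus j) * stdGaussPDF (xs j - t)) ϑ :=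
      integrable_finset_sum _ fun j _ => (hφj j).const_mul _
    have e4 : ∫ t, ((∫ x, m' x ∂(gaussianReal t 1)) - 1
          + ∑ j, (mplus j - mminus j) * stdGaussPDF (xs j - t)) ∂ϑ
        = (∫ t, ((∫ x, m' x ∂(gaussianReal t 1)) - 1) ∂ϑ)
          + ∫ t, (∑ j, (mplus j - mminus j) * stdGaussPDF (xs j - t)) ∂ϑ :=
      integral_add hsub hsum
    have e5 : ∫ t, ((∫ x, m' x ∂(gaussianReal t 1)) - 1) ∂ϑ
        = (∫ t, (∫ x, m' x ∂(gaussianReal t 1)) ∂ϑ) - ∫ _t, (1:ℝ) ∂ϑ :=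
      integral_sub hB (integrable_const 1)
    have e6 : ∫ t, (∑ j, (mplus j - mminus j) * stdGaussPDF (xs j - t)) ∂ϑ
        = ∑ j, ∫ t, (mplus j - mminus j) * stdGaussPDF (xs j - t) ∂ϑ :=
      integral_finset_sum _ fun j _ => (hφj j).const_mul _
    have e7 : (∑ j, ∫ t, (mplus j - mminus j) * stdGaussPDF (xs j - t) ∂ϑ)
        = ∑ j, (mplus j - mminus j) * f (xs j) :=
      Finset.sum_congr rfl fun j _ => by rw [integral_const_mul, hf (xs j)]
    have hm'eq : ∫ z, m' z.1 ∂π = ∫ t, (∫ x, m' x ∂(gaussianReal t 1)) ∂ϑ := by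
      rw [hIntgl (fun z => m' z.1), Measure.integral_compProd h2ρ]
      rfl
    rw [e4, e5, e6, e7, hm'eq]
    simp
  -- final assembly
  have expand : (fun z : ℝ × ℝ => (m z.1 - z.2)^2)
      = fun z => (m z.1 - z.1)^2 + (2*((m z.1 - z.1)*(z.1 - z.2)) + (z.1 - z.2)^2) := by
    funext z; ring
  have hQ2 : Integrable (fun z : ℝ × ℝ => 2 * ((m z.1 - z.1) * (z.1 - z.2))) π :=
    hQ.const_mul 2
  have eA : ∫ z, ((m z.1 - z.1)^2 + (2*((m z.1 - z.1)*(z.1 - z.2)) + (z.1 - z.2)^2)) ∂π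
      = (∫ z, (m z.1 - z.1)^2 ∂π)
        + ∫ z, (2*((m z.1 - z.1)*(z.1 - z.2)) + (z.1 - z.2)^2) ∂π :=
    integral_add hint1 (hQ2.add hR)
  have eB : ∫ z, (2*((m z.1 - z.1)*(z.1 - z.2)) + (z.1 - z.2)^2) ∂π
      = (∫ z, 2*((m z.1 - z.1)*(z.1 - z.2)) ∂π) + ∫ z, (z.1 - z.2)^2 ∂π :=
    integral_add hQ2 hR
  have eC : ∫ z, 2*((m z.1 - z.1)*(z.1 - z.2)) ∂π
      = 2 * ∫ z, (m z.1 - z.1)*(z.1 - z.2) ∂π := integral_const_mul 2 _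
  rw [expand, eA, eB, eC, hQint, hRint]
  ring
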